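/- Let N ≥ 2 be an integer, p ∈ [1, ∞), and let μ₀ be a finite Borel measure on the unit circle ∂𝔻 whose support is infinite. Let μ be the measure on ∂𝔻 defined by ∫ f dμ = ∫ (1/N) ∑_{j=1}^N f(ζ_j(z)) dμ₀(z), where ζ_1(z),…,ζ_N(z) are the N-th roots of z. If T_n is a monic polynomial of degree n satisfying ∫ z^k |T_n(z)|^{p−2} conj(T_n(z)) dμ₀(z) = 0 for k = 0,…,n−1, then for each ℓ ∈ {0,…,N−1} the monic polynomial S(z) = z^ℓ T_n(z^N) of degree ℓ + nN satisfies ∫ z^k |S(z)|^{p−2} conj(S(z)) dμ(z) = 0 for all k = 0,…,ℓ + nN − 1. -/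

import Mathlib

open MeasureTheory Polynomial Filter Topology


lemma conj_eq_inv {w : ℂ} (h : ‖w‖ = 1) : (starRingEnd ℂ) w = w⁻¹ := by
  have h2 : w * (starRingEnd ℂ) w = 1 := by
    rw [Complex.mul_conj]; norm_cast; simp [Complex.normSq_eq_norm_sq, h]
  exact eq_inv_of_mul_eq_one_left (by rw [mul_comm] at h2; exact h2)

lemma mem_rootFinset {N : ℕ} (hN : 0 < N) {z w : ℂ} :
    w ∈ ((X : Polynomial ℂ) ^ N - C z).roots.toFinset ↔ w ^ N = z := by
  rw [Multiset.mem_toFinset,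
    show ((X : Polynomial ℂ) ^ N - C z).roots = nthRoots N z from rfl, mem_nthRoots hN]

lemma rootFinset_eq {N : ℕ} (hN : 0 < N) {z ζ : ℂ} (hζ : ζ ^ N = z) (hζ0 : ζ ≠ 0) :
    ((X : Polynomial ℂ) ^ N - C z).roots.toFinset
      = (Finset.range N).image
          (fun j => ζ * Complex.exp (2 * Real.pi * Complex.I / N) ^ j) := by
  haveI : NeZero N := ⟨hN.ne'⟩
  have hω := Complex.isPrimitiveRoot_exp N hN.ne'
  ext w
  simp only [Finset.mem_image, Finset.mem_range, mem_rootFinset hN]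
  constructor
  · intro hw
    have hz0 : z ≠ 0 := hζ ▸ pow_ne_zero N hζ0
    have h1 : (w / ζ) ^ N = 1 := by rw [div_pow, hζ, hw, div_self hz0]
    obtain ⟨j, hj, hjw⟩ := hω.eq_pow_of_pow_eq_one h1
    exact ⟨j, hj, by rw [hjw]; field_simp⟩
  · rintro ⟨j, hj, rfl⟩
    rw [mul_pow, ← pow_mul, mul_comm j N, pow_mul, hω.pow_eq_one, one_pow, mul_one, hζ]
lemma rootSum {N : ℕ} (hN : 0 < N) {z : ℂ} (hz : z ≠ 0) (k ℓ : ℕ) (hℓ : ℓ < N) :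
    ∑ w ∈ ((X : Polynomial ℂ) ^ N - C z).roots.toFinset, w ^ k / w ^ ℓ =
      if k % N = ℓ then (N : ℂ) * z ^ (k / N) else 0 := by
  obtain ⟨ζ, hζ⟩ := IsAlgClosed.exists_pow_nat_eq z hN
  have hζ0 : ζ ≠ 0 := fun h => hz (by rw [← hζ, h, zero_pow hN.ne'])
  set ω := Complex.exp (2 * Real.pi * Complex.I / N) with hωdef
  have hω : IsPrimitiveRoot ω N := Complex.isPrimitiveRoot_exp N hN.ne'
  have hω0 : ω ≠ 0 := fun h => by simpa [h, zero_pow hN.ne'] using hω.pow_eq_one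
  rw [rootFinset_eq hN hζ hζ0]
  rw [Finset.sum_image (fun a ha b hb hab => by
    have := mul_left_cancel₀ hζ0 hab
    exact hω.pow_inj (Finset.mem_range.mp ha) (Finset.mem_range.mp hb) this)]
  have hterm : ∀ j, (ζ * ω ^ j) ^ k / (ζ * ω ^ j) ^ ℓ
      = (ζ ^ k / ζ ^ ℓ) * ((ω ^ k / ω ^ ℓ)) ^ j := by
    intro j
    rw [mul_pow, mul_pow, div_pow, ← pow_mul, ← pow_mul, mul_comm j k, mul_comm j ℓ,
      pow_mul, pow_mul, mul_div_mul_comm]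
  change ∑ x ∈ Finset.range N, (ζ * ω ^ x) ^ k / (ζ * ω ^ x) ^ ℓ = _
  simp_rw [hterm, ← Finset.mul_sum]
  have hsplit : k = N * (k / N) + k % N := (Nat.div_add_mod k N).symm
  by_cases hc : k % N = ℓ
  · rw [if_pos hc]
    have hu : ω ^ k / ω ^ ℓ = 1 := by
      rw [div_eq_one_iff_eq (pow_ne_zero _ hω0)]
      conv_lhs => rw [hsplit]
      rw [pow_add, pow_mul, hω.pow_eq_one, one_pow, one_mul, hc]
    have hζk : ζ ^ k / ζ ^ ℓ = z ^ (k / N) := by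
      conv_lhs => rw [hsplit]
      rw [pow_add, pow_mul, hζ, hc, mul_div_assoc, div_self (pow_ne_zero _ hζ0), mul_one]
    simp [hu, hζk]; ring
  · rw [if_neg hc]
    have hu : ω ^ k / ω ^ ℓ ≠ 1 := by
      intro h
      rw [div_eq_one_iff_eq (pow_ne_zero _ hω0)] at h
      have h2 : ω ^ (k % N) = ω ^ ℓ := by
        conv_rhs => rw [← h]
        conv_rhs => rw [hsplit]
        rw [pow_add, pow_mul, hω.pow_eq_one, one_pow, one_mul]
      exact hc (hω.pow_inj (Nat.mod_lt _ hN) hℓ h2)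
    rw [geom_sum_eq hu]
    have : (ω ^ k / ω ^ ℓ) ^ N = 1 := by
      rw [div_pow, ← pow_mul, ← pow_mul, mul_comm k N, mul_comm ℓ N, pow_mul, pow_mul,
        hω.pow_eq_one, one_pow, one_pow, div_self one_ne_zero]
    rw [this, sub_self, zero_div, mul_zero]

lemma abs_eq_one_of_pow {N : ℕ} (hN : 0 < N) {w z : ℂ} (hz : ‖z‖ = 1)
    (hw : w ^ N = z) : ‖w‖ = 1 := by
  have h : ‖w‖ ^ N = 1 := by rw [← norm_pow, hw, hz]
  have h0 : 0 ≤ ‖w‖ := norm_nonneg w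
  rcases lt_trichotomy (‖w‖) 1 with h1 | h1 | h1
  · exact absurd h (by nlinarith [pow_lt_one₀ h0 h1 hN.ne'])
  · exact h1
  · exact absurd h (by nlinarith [one_lt_pow₀ h1 hN.ne'])

lemma mu_compl_sphere (N : ℕ) (hN : 0 < N) (μ₀ μ : Measure ℂ)
    [IsFiniteMeasure μ₀] [IsFiniteMeasure μ]
    (hsupp : μ₀ (Metric.sphere (0 : ℂ) 1)ᶜ = 0)
    (hμ : ∀ f : ℂ → ℂ, Continuous f →
      ∫ z, f z ∂μ =
        ∫ z, (N : ℂ)⁻¹ * ∑ w ∈ ((X : Polynomial ℂ) ^ N - C z).roots.toFinset, f w ∂μ₀) :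
    μ (Metric.sphere (0 : ℂ) 1)ᶜ = 0 := by
  have hae : ∀ᵐ z ∂μ₀, z ∈ Metric.sphere (0 : ℂ) 1 := by
    rw [ae_iff]
    exact hsupp
  set g : ℂ → ℝ := fun w => |‖w‖ - 1| with hg
  have hgc : Continuous g := (continuous_norm.sub continuous_const).abs
  have hgz : ∀ w : ℂ, ‖w‖ = 1 → g w = 0 := by
    intro w hw; simp [hg, hw]
  have key : ∀ j : ℕ, μ {w : ℂ | 1 / (j + 1 : ℝ) ≤ g w} = 0 := by
    intro j
    set f : ℂ → ℝ := fun w => min 1 ((j + 1 : ℝ) * g w) with hf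
    have hfc : Continuous f := continuous_const.min (continuous_const.mul hgc)
    have hfnn : 0 ≤ f := fun w => le_min zero_le_one
      (mul_nonneg (by positivity) (abs_nonneg _))
    have h0 := hμ (fun w => ((f w : ℝ) : ℂ)) (Complex.continuous_ofReal.comp hfc)
    have hrhs : ∫ z, (N : ℂ)⁻¹ *
        ∑ w ∈ ((X : Polynomial ℂ) ^ N - C z).roots.toFinset, ((f w : ℝ) : ℂ) ∂μ₀ = 0 := by
      rw [← integral_zero ℂ ℂ (μ := μ₀)]
      apply integral_congr_ae
      filter_upwards [hae] with z hz
      have hza : ‖z‖ = 1 := by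
        rwa [mem_sphere_zero_iff_norm] at hz
      have : ∀ w ∈ ((X : Polynomial ℂ) ^ N - C z).roots.toFinset, ((f w : ℝ) : ℂ) = 0 := by
        intro w hw
        have habs := abs_eq_one_of_pow hN hza ((mem_rootFinset hN).mp hw)
        simp [hf, hgz w habs]
      rw [Finset.sum_congr rfl this]
      simp
    rw [hrhs] at h0
    have h0' : ((∫ z, f z ∂μ : ℝ) : ℂ) = 0 := by
      rw [← h0]; exact (integral_ofReal).symm
    have hint : Integrable f μ := by
      refine Integrable.mono' (integrable_const 1) hfc.aestronglyMeasurable ?_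
      refine Eventually.of_forall fun w => ?_
      rw [Real.norm_eq_abs, abs_of_nonneg (hfnn w)]
      exact min_le_left _ _
    have hf0 : f =ᵐ[μ] 0 := (integral_eq_zero_iff_of_nonneg hfnn hint).mp
      (by exact_mod_cast h0')
    have : μ {w : ℂ | f w ≠ 0} = 0 := by
      rw [← ae_iff] at *
      filter_upwards [hf0] with w hw
      simpa using hw
    refine measure_mono_null (fun w hw => ?_) this
    simp only [Set.mem_setOf_eq] at hw ⊢
    have hjpos : (0:ℝ) < j + 1 := by positivity
    have h1 : (1 : ℝ) ≤ (j + 1 : ℝ) * g w := by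
      have h2 := mul_le_mul_of_nonneg_left hw (le_of_lt hjpos)
      rwa [mul_one_div_cancel (ne_of_gt hjpos)] at h2
    have : f w = 1 := min_eq_left h1 ▸ rfl
    rw [hf]
    simp only [ne_eq]
    rw [min_eq_left h1]
    norm_num
  refine measure_mono_null (fun w hw => ?_) (measure_iUnion_null key)
  simp only [Set.mem_compl_iff, mem_sphere_zero_iff_norm] at hw
  have hgpos : 0 < g w := abs_pos.mpr (sub_ne_zero.mpr hw)
  obtain ⟨j, hj⟩ := exists_nat_one_div_lt hgpos
  exact Set.mem_iUnion.mpr ⟨j, le_of_lt hj⟩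

lemma eval_bound (Q : Polynomial ℂ) {w : ℂ} (hw : ‖w‖ = 1) :
    ‖Q.eval w‖ ≤ ∑ i ∈ Finset.range (Q.natDegree + 1), ‖Q.coeff i‖ := by
  rw [Polynomial.eval, eval₂_eq_sum_range]
  refine (norm_sum_le _ _).trans ?_
  apply Finset.sum_le_sum
  intro i _
  rw [norm_mul, norm_pow, hw, one_pow, mul_one]
  simp

lemma contAux (Q : Polynomial ℂ) (c : ℂ → ℂ) (hc : Continuous c) {e : ℝ} (he : 0 < e) (q : ℝ) :
    Continuous fun w : ℂ =>
      c w * ((max (‖Q.eval w‖) e ^ q : ℝ) : ℂ) * (starRingEnd ℂ) (Q.eval w) := by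
  have h1 : Continuous fun w : ℂ => max (‖Q.eval w‖) e :=
    (continuous_norm.comp Q.continuous).max continuous_const
  have h2 : Continuous fun w : ℂ => (max (‖Q.eval w‖) e) ^ q := by
    rw [continuous_iff_continuousAt]
    intro w
    exact h1.continuousAt.rpow_const
      (Or.inl (lt_of_lt_of_le he (le_max_right _ _)).ne')
  exact (hc.mul (Complex.continuous_ofReal.comp h2)).mul
    (Complex.continuous_conj.comp Q.continuous)

lemma tendsto_aux (μ : Measure ℂ) [IsFiniteMeasure μ]
    (hμc : μ (Metric.sphere (0 : ℂ) 1)ᶜ = 0) (Q : Polynomial ℂ) {p : ℝ} (hp : 1 ≤ p)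
    (c : ℂ → ℂ) (hc : Continuous c)
    (hcb : ∀ w : ℂ, ‖w‖ = 1 → ‖c w‖ ≤ 1) :
    Filter.Tendsto
      (fun m : ℕ => ∫ w, c w *
          ((max (‖Q.eval w‖) (1 / (m + 1 : ℝ)) ^ (p - 2) : ℝ) : ℂ) *
          (starRingEnd ℂ) (Q.eval w) ∂μ) Filter.atTop
      (𝓝 (∫ w, c w * ((‖Q.eval w‖ ^ (p - 2) : ℝ) : ℂ) *
          (starRingEnd ℂ) (Q.eval w) ∂μ)) := by
  have hae : ∀ᵐ w ∂μ, w ∈ Metric.sphere (0 : ℂ) 1 := by rw [ae_iff]; exact hμc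
  set A := ∑ i ∈ Finset.range (Q.natDegree + 1), ‖Q.coeff i‖ with hA
  have hA0 : 0 ≤ A := Finset.sum_nonneg fun i _ => norm_nonneg _
  have hA1 : (0:ℝ) < A + 1 := by linarith
  set B := (A + 1) ^ (p - 2) * (A + 1) + (A + 1) ^ (p - 1) with hB
  have hem : ∀ m : ℕ, (0:ℝ) < 1 / (m + 1) := fun m => by positivity
  apply tendsto_integral_of_dominated_convergence (fun _ => B)
  · intro m; exact (contAux Q c hc (hem m) _).aestronglyMeasurable
  · exact integrable_const B
  · intro m
    filter_upwards [hae] with w hw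
    rw [mem_sphere_zero_iff_norm] at hw
    have hQA : ‖Q.eval w‖ ≤ A := eval_bound Q hw
    set q := ‖Q.eval w‖ with hq
    have hq0 : 0 ≤ q := norm_nonneg _
    have hmax0 : (0:ℝ) < max q (1/(m+1)) := lt_of_lt_of_le (hem m) (le_max_right _ _)
    have hr0 : (0:ℝ) ≤ max q (1/(m+1)) ^ (p-2) := Real.rpow_nonneg hmax0.le _
    have hnorm : ‖c w * ((max q (1/(m+1:ℝ)) ^ (p-2) : ℝ) : ℂ) * (starRingEnd ℂ) (Q.eval w)‖
        = ‖c w‖ * (max q (1/(m+1)) ^ (p-2)) * q := by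
      rw [norm_mul, norm_mul, Complex.norm_real, Real.norm_eq_abs, abs_of_nonneg hr0,
        Complex.norm_conj]
    rw [hnorm]
    have h1 : ‖c w‖ * (max q (1/(m+1)) ^ (p-2)) * q
        ≤ (max q (1/(m+1)) ^ (p-2)) * q :=
      mul_le_mul_of_nonneg_right (mul_le_of_le_one_left hr0 (hcb w hw)) hq0
    refine h1.trans ?_
    rcases le_or_gt 2 p with h2p | h2p
    · have hd1 : (1:ℝ)/(m+1) ≤ 1 := by
        rw [div_le_one (by positivity)]
        have : (0:ℝ) ≤ (m:ℝ) := Nat.cast_nonneg m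
        linarith
      have hmaxle : max q (1/(m+1:ℝ)) ≤ A + 1 := max_le (by linarith) (by linarith)
      have h2 : max q (1/(m+1:ℝ)) ^ (p-2) ≤ (A+1) ^ (p-2) :=
        Real.rpow_le_rpow hmax0.le hmaxle (by linarith)
      have h3 : (max q (1/(m+1:ℝ)) ^ (p-2)) * q ≤ (A+1) ^ (p-2) * (A+1) :=
        mul_le_mul h2 (by linarith) hq0 (Real.rpow_nonneg hA1.le _)
      have h4 : (0:ℝ) ≤ (A+1) ^ (p-1) := Real.rpow_nonneg hA1.le _
      rw [hB]; linarith
    · have hB0 : (0:ℝ) ≤ B := by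
        rw [hB]
        have := Real.rpow_nonneg hA1.le (p-2)
        have := Real.rpow_nonneg hA1.le (p-1)
        nlinarith
      by_cases hq00 : q = 0
      · rw [hq00, mul_zero]; exact hB0
      · have hqpos : 0 < q := lt_of_le_of_ne hq0 (Ne.symm hq00)
        have h3 : max q (1/(m+1:ℝ)) ^ (p-2) ≤ q ^ (p-2) :=
          Real.rpow_le_rpow_of_nonpos hqpos (le_max_left _ _) (by linarith)
        have h4 : (max q (1/(m+1:ℝ)) ^ (p-2)) * q ≤ q^(p-2) * q :=
          mul_le_mul_of_nonneg_right h3 hq0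
        have h5 : q^(p-2) * q = q^(p-1) := by
          conv_lhs => rw [show q ^ (p-2) * q = q ^ (p-2) * q ^ (1:ℝ) by rw [Real.rpow_one]]
          rw [← Real.rpow_add hqpos, show p - 2 + 1 = p - 1 by ring]
        have h6 : q^(p-1) ≤ (A+1)^(p-1) :=
          Real.rpow_le_rpow hq0 (by linarith) (by linarith)
        have h7 : (0:ℝ) ≤ (A+1) ^ (p-2) * (A+1) :=
          mul_nonneg (Real.rpow_nonneg hA1.le _) hA1.le
        rw [hB]; linarith
  · refine Eventually.of_forall fun w => ?_
    by_cases hq : Q.eval w = 0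
    · have hz : ∀ m : ℕ, c w *
          ((max (‖Q.eval w‖) (1 / (m + 1 : ℝ)) ^ (p - 2) : ℝ) : ℂ) *
          (starRingEnd ℂ) (Q.eval w) = 0 := fun m => by simp [hq]
      have h2 : c w * ((‖Q.eval w‖ ^ (p-2) : ℝ) : ℂ) *
          (starRingEnd ℂ) (Q.eval w) = 0 := by simp [hq]
      rw [h2]
      exact tendsto_const_nhds.congr fun m => (hz m).symm
    · have hqpos : 0 < ‖Q.eval w‖ := norm_pos_iff.mpr hq
      obtain ⟨M, hM⟩ := exists_nat_one_div_lt hqpos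
      apply Filter.Tendsto.congr' _ tendsto_const_nhds
      filter_upwards [Filter.eventually_ge_atTop M] with m hm
      have hle : (1:ℝ)/(m+1) ≤ 1/(M+1) := by
        apply one_div_le_one_div_of_le (by positivity)
        have : (M:ℝ) ≤ (m:ℝ) := Nat.cast_le.mpr hm
        linarith
      rw [max_eq_left (hle.trans hM.le)]

lemma sum_identity {N : ℕ} (hN : 0 < N) {z : ℂ} (hz : ‖z‖ = 1)
    {k ℓ : ℕ} (hℓ : ℓ < N) (T S : Polynomial ℂ)
    (hS : S = X ^ ℓ * T.comp ((X : Polynomial ℂ) ^ N)) (e p : ℝ) (he : 0 < e) :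
    (N : ℂ)⁻¹ * ∑ w ∈ ((X : Polynomial ℂ) ^ N - C z).roots.toFinset,
        (w ^ k * ((max (‖S.eval w‖) e ^ (p - 2) : ℝ) : ℂ) *
          (starRingEnd ℂ) (S.eval w)) =
      (if k % N = ℓ then z ^ (k / N) else 0) *
        ((max (‖T.eval z‖) e ^ (p - 2) : ℝ) : ℂ) *
        (starRingEnd ℂ) (T.eval z) := by
  have hz0 : z ≠ 0 := fun h => by simp [h] at hz
  have hterm : ∀ w ∈ ((X : Polynomial ℂ) ^ N - C z).roots.toFinset,
      w ^ k * ((max (‖S.eval w‖) e ^ (p - 2) : ℝ) : ℂ) *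
        (starRingEnd ℂ) (S.eval w)
      = (w ^ k / w ^ ℓ) * (((max (‖T.eval z‖) e ^ (p - 2) : ℝ) : ℂ) *
          (starRingEnd ℂ) (T.eval z)) := by
    intro w hw
    have hwN : w ^ N = z := (mem_rootFinset hN).mp hw
    have habs : ‖w‖ = 1 := abs_eq_one_of_pow hN hz hwN
    have hSe : S.eval w = w ^ ℓ * T.eval z := by
      rw [hS]; simp [eval_mul, eval_pow, eval_comp, hwN]
    have habsS : ‖S.eval w‖ = ‖T.eval z‖ := by
      rw [hSe, norm_mul, norm_pow, habs, one_pow, one_mul]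
    have hconj : (starRingEnd ℂ) (S.eval w) = (w ^ ℓ)⁻¹ * (starRingEnd ℂ) (T.eval z) := by
      rw [hSe, map_mul, map_pow, conj_eq_inv habs, inv_pow]
    rw [habsS, hconj, div_eq_mul_inv]; ring
  rw [Finset.sum_congr rfl hterm, ← Finset.sum_mul, rootSum hN hz0 k ℓ hℓ]
  have hNne : (N : ℂ) ≠ 0 := Nat.cast_ne_zero.mpr hN.ne'
  split_ifs with h
  · field_simp
  · simp

/-- Extremal polynomials on the pre-image of the unit circle under `z ↦ z^N`:
if `T_n` is a monic degree-`n` polynomial satisfying the `L^p(μ₀)` extremality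
(orthogonality) conditions for a measure `μ₀` on the unit circle with infinite
support, and `μ` is the pull-back of `μ₀` under `z ↦ z^N` (averaging over the
`N`-th roots), then for each `ℓ ∈ {0,…,N-1}` the monic polynomial
`S(z) = z^ℓ T_n(z^N)` satisfies the `L^p(μ)` extremality conditions in degree
`ℓ + nN`. -/
theorem stmt_16 (N : ℕ) (hN : 2 ≤ N) (p : ℝ) (hp : 1 ≤ p)
    (μ₀ μ : Measure ℂ) [IsFiniteMeasure μ₀] [IsFiniteMeasure μ]
    (hsupp : μ₀ (Metric.sphere (0 : ℂ) 1)ᶜ = 0)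
    (hinf : {z : ℂ | ∀ r : ℝ, 0 < r → 0 < μ₀ (Metric.ball z r)}.Infinite)
    (hμ : ∀ f : ℂ → ℂ, Continuous f →
      ∫ z, f z ∂μ =
        ∫ z, (N : ℂ)⁻¹ * ∑ w ∈ ((X : Polynomial ℂ) ^ N - C z).roots.toFinset, f w ∂μ₀)
    (n : ℕ) (T : Polynomial ℂ) (hT : T.Monic) (hTdeg : T.natDegree = n)
    (hText : ∀ k : ℕ, k < n →
      ∫ z, z ^ k * ((‖T.eval z‖ ^ (p - 2) : ℝ) : ℂ) *
        (starRingEnd ℂ) (T.eval z) ∂μ₀ = 0)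
    (ℓ : ℕ) (hℓ : ℓ < N)
    (S : Polynomial ℂ) (hS : S = X ^ ℓ * T.comp ((X : Polynomial ℂ) ^ N)) :
    ∀ k : ℕ, k < ℓ + n * N →
      ∫ z, z ^ k * ((‖S.eval z‖ ^ (p - 2) : ℝ) : ℂ) *
        (starRingEnd ℂ) (S.eval z) ∂μ = 0 := by
  intro k hk
  have hN0 : 0 < N := by omega
  have hem : ∀ m : ℕ, (0:ℝ) < 1 / (m + 1) := fun m => by positivity
  have hμc := mu_compl_sphere N hN0 μ₀ μ hsupp hμ
  have hae₀ : ∀ᵐ z ∂μ₀, z ∈ Metric.sphere (0 : ℂ) 1 := by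
    rw [ae_iff]; exact hsupp
  -- LHS limit
  have hLHS : Tendsto (fun m : ℕ => ∫ w, w ^ k *
        ((max (‖S.eval w‖) (1 / (m + 1 : ℝ)) ^ (p - 2) : ℝ) : ℂ) *
        (starRingEnd ℂ) (S.eval w) ∂μ) atTop
      (𝓝 (∫ w, w ^ k * ((‖S.eval w‖ ^ (p - 2) : ℝ) : ℂ) *
        (starRingEnd ℂ) (S.eval w) ∂μ)) :=
    tendsto_aux μ hμc S hp (fun w => w ^ k) (continuous_pow k)
      (fun w hw => by rw [norm_pow, hw, one_pow])
  -- RHS limit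
  have hRHS : Tendsto (fun m : ℕ => ∫ z, (if k % N = ℓ then z ^ (k / N) else 0) *
        ((max (‖T.eval z‖) (1 / (m + 1 : ℝ)) ^ (p - 2) : ℝ) : ℂ) *
        (starRingEnd ℂ) (T.eval z) ∂μ₀) atTop
      (𝓝 (∫ z, (if k % N = ℓ then z ^ (k / N) else 0) *
        ((‖T.eval z‖ ^ (p - 2) : ℝ) : ℂ) *
        (starRingEnd ℂ) (T.eval z) ∂μ₀)) := by
    refine tendsto_aux μ₀ hsupp T hp (fun z => if k % N = ℓ then z ^ (k / N) else 0) ?_ ?_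
    · split_ifs
      · exact continuous_pow _
      · exact continuous_const
    · intro w hw
      split_ifs
      · rw [norm_pow, hw, one_pow]
      · simp
  -- equality of the two sequences
  have key : ∀ m : ℕ, (∫ w, w ^ k *
        ((max (‖S.eval w‖) (1 / (m + 1 : ℝ)) ^ (p - 2) : ℝ) : ℂ) *
        (starRingEnd ℂ) (S.eval w) ∂μ)
      = ∫ z, (if k % N = ℓ then z ^ (k / N) else 0) *
        ((max (‖T.eval z‖) (1 / (m + 1 : ℝ)) ^ (p - 2) : ℝ) : ℂ) *
        (starRingEnd ℂ) (T.eval z) ∂μ₀ := by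
    intro m
    have hcont := contAux S (fun w => w ^ k) (continuous_pow k) (hem m) (p - 2)
    rw [hμ _ hcont]
    apply integral_congr_ae
    filter_upwards [hae₀] with z hzs
    rw [mem_sphere_zero_iff_norm] at hzs
    exact sum_identity hN0 hzs hℓ T S hS (1 / (m + 1 : ℝ)) p (hem m)
  have hLHS2 : Tendsto (fun m : ℕ => ∫ z, (if k % N = ℓ then z ^ (k / N) else 0) *
        ((max (‖T.eval z‖) (1 / (m + 1 : ℝ)) ^ (p - 2) : ℝ) : ℂ) *
        (starRingEnd ℂ) (T.eval z) ∂μ₀) atTop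
      (𝓝 (∫ w, w ^ k * ((‖S.eval w‖ ^ (p - 2) : ℝ) : ℂ) *
        (starRingEnd ℂ) (S.eval w) ∂μ)) := hLHS.congr key
  have hzero : ∫ z, (if k % N = ℓ then z ^ (k / N) else 0) *
        ((‖T.eval z‖ ^ (p - 2) : ℝ) : ℂ) *
        (starRingEnd ℂ) (T.eval z) ∂μ₀ = 0 := by
    by_cases hcase : k % N = ℓ
    · have hdm : N * (k / N) + k % N = k := Nat.div_add_mod k N
      have h1 : N * (k / N) + ℓ = k := by rw [← hcase]; exact hdm
      have h2 : N * (k / N) < N * n := by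
        have h3 : n * N = N * n := Nat.mul_comm n N
        linarith
      have hm0 : k / N < n := Nat.lt_of_mul_lt_mul_left h2
      simp only [if_pos hcase]
      exact hText (k / N) hm0
    · simp only [if_neg hcase, zero_mul]
      simp
  have := tendsto_nhds_unique hLHS2 hRHS
  rw [this]
  exact hzero
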